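/- For every integer n ≥ 1, the number of Catalan words of length n avoiding the vincular pattern 2-12 equals the Fibonacci number F_{2n−1}. -/

import Mathlib

/-- A Catalan word: a word of positive integers starting with 1 in which each
letter exceeds its predecessor by at most 1. -/
def IsCatalanWord {n : ℕ} (w : Fin n → ℕ) : Prop :=
  (∀ i, 1 ≤ w i) ∧ (∀ h : 0 < n, w ⟨0, h⟩ = 1) ∧
  ∀ i : ℕ, ∀ h : i + 1 < n, w ⟨i + 1, h⟩ ≤ w ⟨i, by omega⟩ + 1

/-- `w` contains the vincular pattern 2-12: there are indices `i < j` with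
`w j < w i` and `w (j+1) = w i`. -/
def Contains2_12 {n : ℕ} (w : Fin n → ℕ) : Prop :=
  ∃ i j : ℕ, ∃ hj : j + 1 < n, ∃ hij : i < j,
    w ⟨j, by omega⟩ < w ⟨i, by omega⟩ ∧ w ⟨j + 1, hj⟩ = w ⟨i, by omega⟩

/-! ### ℕ-indexed versions -/

def Cat' (v : ℕ → ℕ) (n : ℕ) : Prop :=
  (∀ i, i < n → 1 ≤ v i) ∧ (0 < n → v 0 = 1) ∧ ∀ i, i + 1 < n → v (i+1) ≤ v i + 1

def Avd' (v : ℕ → ℕ) (n : ℕ) : Prop :=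
  ¬ ∃ i j, j + 1 < n ∧ i < j ∧ v j < v i ∧ v (j+1) = v i

/-- reversed prefix of length `n` of `v` -/
def listOf (v : ℕ → ℕ) : ℕ → List ℕ
  | 0 => []
  | n+1 => v n :: listOf v n

@[simp] lemma listOf_zero (v : ℕ → ℕ) : listOf v 0 = [] := rfl
@[simp] lemma listOf_succ (v : ℕ → ℕ) (n : ℕ) : listOf v (n+1) = v n :: listOf v n := rfl

lemma mem_listOf {v : ℕ → ℕ} {n : ℕ} {x : ℕ} : x ∈ listOf v n ↔ ∃ i, i < n ∧ v i = x := by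
  induction n with
  | zero => simp
  | succ n ih =>
    simp only [listOf_succ, List.mem_cons, ih]
    constructor
    · rintro (h | ⟨i, hi, hx⟩)
      · exact ⟨n, by omega, h.symm⟩
      · exact ⟨i, by omega, hx⟩
    · rintro ⟨i, hi, hx⟩
      rcases Nat.lt_or_ge i n with h | h
      · exact Or.inr ⟨i, h, hx⟩
      · left; have : i = n := by omega
        rw [← this, hx]

@[simp] lemma length_listOf (v : ℕ → ℕ) (n : ℕ) : (listOf v n).length = n := by
  induction n with
  | zero => rfl
  | succ n ih => simp [ih]

def maxL (u : List ℕ) : ℕ := u.foldr max 0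

@[simp] lemma maxL_nil : maxL [] = 0 := rfl
@[simp] lemma maxL_cons (a : ℕ) (u : List ℕ) : maxL (a :: u) = max a (maxL u) := rfl

lemma le_maxL {x : ℕ} {u : List ℕ} (h : x ∈ u) : x ≤ maxL u := by
  induction u with
  | nil => simp at h
  | cons a u ih =>
    rcases List.mem_cons.1 h with h | h
    · simp [h]
    · simp only [maxL_cons]; exact le_trans (ih h) (le_max_right _ _)

lemma maxL_le {b : ℕ} {u : List ℕ} (h : ∀ x ∈ u, x ≤ b) : maxL u ≤ b := by
  induction u with
  | nil => simp
  | cons a u ih =>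
    simp only [maxL_cons, max_le_iff]
    exact ⟨h a (by simp), ih (fun x hx => h x (by simp [hx]))⟩

inductive RV : List ℕ → Prop
  | base : RV [1]
  | step (l t : ℕ) (w : List ℕ) : RV (t :: w) → 1 ≤ l →
      (l ≤ t ∨ (l = t + 1 ∧ maxL (t :: w) = t)) → RV (l :: t :: w)

lemma RV_single {x : ℕ} (h : RV [x]) : x = 1 := by
  cases h; rfl

lemma RV_cons {a b : ℕ} {u : List ℕ} (h : RV (a :: b :: u)) :
    RV (b :: u) ∧ 1 ≤ a ∧ (a ≤ b ∨ (a = b + 1 ∧ maxL (b :: u) = b)) := by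
  cases h with
  | step _ _ _ h1 h2 h3 => exact ⟨h1, h2, h3⟩

/-- intermediate value lemma -/
lemma ivl {v : ℕ → ℕ} {n : ℕ} (hv : Cat' v n) :
    ∀ i, i < n → ∀ x, 1 ≤ x → x ≤ v i → ∃ j, j ≤ i ∧ v j = x := by
  obtain ⟨h1, h2, h3⟩ := hv
  intro i
  induction i with
  | zero =>
    intro h x hx1 hx2
    rw [h2 (by omega)] at hx2
    exact ⟨0, le_refl _, by rw [h2 (by omega)]; omega⟩
  | succ i ih =>
    intro h x hx1 hx2
    by_cases hc : x ≤ v i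
    · obtain ⟨j, hj, hjv⟩ := ih (by omega) x hx1 hc
      exact ⟨j, by omega, hjv⟩
    · have := h3 i h
      exact ⟨i+1, le_refl _, by omega⟩

lemma rv_iff' : ∀ (n : ℕ) (v : ℕ → ℕ), (Cat' v (n+1) ∧ Avd' v (n+1)) ↔ RV (listOf v (n+1)) := by
  intro n
  induction n with
  | zero =>
    intro v
    simp only [listOf_succ, listOf_zero]
    constructor
    · rintro ⟨⟨h1, h2, h3⟩, _⟩
      rw [h2 (by omega)]; exact RV.base
    · intro h
      have h0 : v 0 = 1 := RV_single h
      refine ⟨⟨fun i hi => ?_, fun _ => h0, fun i hi => by omega⟩,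
        by rintro ⟨i, j, hj, hij, _, _⟩; omega⟩
      have : i = 0 := by omega
      rw [this, h0]
  | succ n ih =>
    intro v
    have hd : listOf v (n+2) = v (n+1) :: v n :: listOf v n := rfl
    constructor
    · rintro ⟨hcat, havd⟩
      have hcat' : Cat' v (n+1) := ⟨fun i hi => hcat.1 i (by omega), fun _ => hcat.2.1 (by omega),
        fun i hi => hcat.2.2 i (by omega)⟩
      have havd' : Avd' v (n+1) := by
        rintro ⟨i, j, hj, hij, h1, h2⟩
        exact havd ⟨i, j, by omega, hij, h1, h2⟩
      have hrv' : RV (listOf v (n+1)) := (ih v).mp ⟨hcat', havd'⟩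
      rw [hd]
      refine RV.step _ _ _ hrv' (hcat.1 (n+1) (by omega)) ?_
      by_cases hle : v (n+1) ≤ v n
      · exact Or.inl hle
      · right
        have hstep : v (n+1) ≤ v n + 1 := hcat.2.2 n (by omega)
        have hlt : v (n+1) = v n + 1 := by omega
        have hbd : ∀ x ∈ listOf v (n+1), x ≤ v n := by
          intro x hx
          obtain ⟨i, hi, hix⟩ := mem_listOf.1 hx
          by_contra hgt
          have hin : i < n := by
            by_contra hge
            have : i = n := by omega
            subst this
            omega
          obtain ⟨j, hj, hjv⟩ := ivl hcat i (by omega) (v n + 1) (by omega) (by omega)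
          exact havd ⟨j, n, by omega, by omega, by omega, by omega⟩
        refine ⟨hlt, ?_⟩
        have h1 : maxL (listOf v (n+1)) ≤ v n := maxL_le hbd
        have h2 : v n ≤ maxL (listOf v (n+1)) :=
          le_maxL (mem_listOf.2 ⟨n, by omega, rfl⟩)
        simp only [listOf_succ] at h1 h2 ⊢
        omega
    · intro hrv
      rw [hd] at hrv
      obtain ⟨hrv', hl1, hcond⟩ := RV_cons hrv
      have hrv2 : RV (listOf v (n+1)) := hrv'
      obtain ⟨hcat', havd'⟩ := (ih v).mpr hrv2
      have hlt1 : v (n+1) ≤ v n + 1 := by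
        rcases hcond with h | ⟨h, _⟩ <;> omega
      constructor
      · refine ⟨fun i hi => ?_, fun _ => hcat'.2.1 (by omega), fun i hi => ?_⟩
        · rcases Nat.lt_or_ge i (n+1) with h | h
          · exact hcat'.1 i h
          · have : i = n + 1 := by omega
            rw [this]; exact hl1
        · rcases Nat.lt_or_ge (i+1) (n+1) with h | h
          · exact hcat'.2.2 i h
          · have : i = n := by omega
            rw [this]; exact hlt1
      · rintro ⟨i, j, hj, hij, hjlt, hjeq⟩
        rcases Nat.lt_or_ge (j+1) (n+1) with h | h
        · exact havd' ⟨i, j, h, hij, hjlt, hjeq⟩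
        · have hjn : j = n := by omega
          rw [hjn] at hjlt hjeq
          rcases hcond with hc | ⟨hc, hmax⟩
          · omega
          · have : v i ≤ v n := by
              have hm : v i ≤ maxL (v n :: listOf v n) := by
                have : v i ∈ listOf v (n+1) := mem_listOf.2 ⟨i, by omega, rfl⟩
                exact le_maxL this
              omega
            omega

/-! ### Class finsets -/

def W : ℕ → ℕ → ℕ → Finset (List ℕ)
  | 0, _, _ => ∅
  | 1, m, l => if m = 1 ∧ l = 1 then {[1]} else ∅
  | n+2, m, l =>
    if l = m then
      ((W (n+1) m m).image (List.cons m)) ∪ ((W (n+1) (m-1) (m-1)).image (List.cons m))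
    else if 1 ≤ l ∧ l < m then
      (Finset.Icc l m).biUnion (fun t => (W (n+1) m t).image (List.cons l))
    else ∅

theorem W_spec : ∀ (n m l : ℕ) (u : List ℕ), u ∈ W n m l →
    RV u ∧ u.length = n ∧ u.headI = l ∧ maxL u = m ∧ 1 ≤ l ∧ l ≤ m
  | 0, m, l, u => by simp [W]
  | 1, m, l, u => by
    rw [W]
    split
    · rename_i h
      intro hu
      rw [Finset.mem_singleton] at hu
      subst hu
      obtain ⟨h1, h2⟩ := h
      subst h1; subst h2
      exact ⟨RV.base, rfl, rfl, rfl, le_refl _, le_refl _⟩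
    · simp
  | (n+2), m, l, u => by
    rw [W]
    split
    · rename_i hlm
      subst hlm
      intro hu
      rcases Finset.mem_union.1 hu with hu | hu <;>
        obtain ⟨w, hw, rfl⟩ := Finset.mem_image.1 hu
      · obtain ⟨hrv, hlen, hhead, hmax, hl1, hlm⟩ := W_spec (n+1) l l w hw
        match w, hrv with
        | (a :: w'), hrv =>
          have ha : a = l := hhead
          subst ha
          refine ⟨RV.step _ _ _ hrv hl1 (Or.inl (le_refl _)), by simp only [List.length_cons] at hlen ⊢; omega,
            rfl, ?_, hl1, le_refl _⟩
          simp only [maxL_cons] at hmax ⊢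
          omega
      · obtain ⟨hrv, hlen, hhead, hmax, hl1, hlm⟩ := W_spec (n+1) (l-1) (l-1) w hw
        match w, hrv with
        | (a :: w'), hrv =>
          have ha : a = l - 1 := hhead
          subst ha
          have hl2 : 2 ≤ l := by omega
          refine ⟨RV.step _ _ _ hrv (by omega) (Or.inr ⟨by omega, hmax⟩), by simp only [List.length_cons] at hlen ⊢; omega,
            rfl, ?_, by omega, le_refl _⟩
          simp only [maxL_cons] at hmax ⊢
          omega
    · rename_i hne
      split
      case isFalse.isFalse => simp
      rename_i hc
      obtain ⟨hl1, hlm⟩ := hc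
      intro hu
      obtain ⟨t, ht, hu⟩ := Finset.mem_biUnion.1 hu
      obtain ⟨w, hw, rfl⟩ := Finset.mem_image.1 hu
      obtain ⟨hrv, hlen, hhead, hmax, ht1, htm⟩ := W_spec (n+1) m t w hw
      rw [Finset.mem_Icc] at ht
      match w, hrv with
      | (a :: w'), hrv =>
        have ha : a = t := hhead
        subst ha
        refine ⟨RV.step _ _ _ hrv hl1 (Or.inl ht.1), by simp only [List.length_cons] at hlen ⊢; omega,
          rfl, ?_, hl1, by omega⟩
        simp only [maxL_cons] at hmax ⊢
        omega

theorem W_complete : ∀ (u : List ℕ), RV u → u ∈ W u.length (maxL u) u.headI := by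
  intro u h
  induction h with
  | base =>
    show [1] ∈ W 1 (max 1 (maxL [])) 1
    rw [W]
    simp [maxL]
  | step l t w hrv h1 hcond ih =>
    obtain ⟨_, _, _, _, ht1', htM'⟩ := W_spec _ _ _ _ ih
    have ht1 : 1 ≤ t := ht1'
    set M := maxL (t :: w) with hM
    have htM : t ≤ M := htM'
    show (l :: t :: w) ∈ W (w.length + 2) (max l M) l
    rcases hcond with hle | ⟨hl, hmax⟩
    · rcases Nat.lt_or_ge l M with hlM | hlM
      · -- l < M
        have hmx : max l M = M := by omega
        rw [hmx, W]
        rw [if_neg (by omega)]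
        rw [if_pos ⟨h1, hlM⟩]
        refine Finset.mem_biUnion.2 ⟨t, Finset.mem_Icc.2 ⟨hle, htM⟩, ?_⟩
        refine Finset.mem_image.2 ⟨t :: w, ?_, rfl⟩
        simpa using ih
      · -- l = M, hence t = M
        have hlM' : l = M := by
          have : t ≤ M := htM
          omega
        have htM' : t = M := by omega
        have hmx : max l M = l := by omega
        have hlt : l = t := by omega
        rw [hmx, W, if_pos rfl]
        refine Finset.mem_union_left _ ?_
        refine Finset.mem_image.2 ⟨t :: w, ?_, by rw [hlt]⟩
        have h2 : t :: w ∈ W (w.length + 1) M t := by simpa using ih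
        rw [← htM'] at h2
        rw [hlt]
        exact h2
    · -- ascent: l = t + 1, maxL (t::w) = t
      have hMt : M = t := hmax
      have hmx : max l M = l := by omega
      rw [hmx, W, if_pos rfl]
      refine Finset.mem_union_right _ ?_
      refine Finset.mem_image.2 ⟨t :: w, ?_, rfl⟩
      have h2 : t :: w ∈ W (w.length + 1) M t := by simpa using ih
      rw [hMt] at h2
      have h1 : l - 1 = t := by omega
      rw [h1]
      exact h2

lemma W_zero : ∀ n l, W n 0 l = ∅
  | 0, l => rfl
  | 1, l => by rw [W, if_neg]; rintro ⟨h, _⟩; omega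
  | n+2, l => by
    rw [W]
    split
    · rename_i h
      subst h
      simp [W_zero (n+1) 0]
    · split
      · rename_i h
        omega
      · rfl

lemma hockA : ∀ (d ν a : ℕ),
    Nat.choose ν a + ∑ u ∈ Finset.range (d+1), Nat.choose (ν+u) (a+u+1)
      = Nat.choose (ν+d+1) (a+d+1) := by
  intro d
  induction d with
  | zero =>
    intro ν a
    simp [Nat.choose_succ_succ]
  | succ d ih =>
    intro ν a
    rw [Finset.sum_range_succ, ← Nat.add_assoc, ih ν a]
    have e1 : ν + (d+1) = ν + d + 1 := by omega
    have e2 : a + (d+1) + 1 = (a+d+1) + 1 := by omega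
    have e3 : ν + (d+1) + 1 = (ν+d+1) + 1 := by omega
    rw [e1, e2]
    conv_rhs => rw [Nat.choose_succ_succ]

lemma sum_Icc_eq (f : ℕ → ℕ) : ∀ (a d : ℕ),
    ∑ t ∈ Finset.Icc a (a+d), f t = ∑ i ∈ Finset.range (d+1), f (a+d-i) := by
  intro a d
  induction d with
  | zero => simp
  | succ d ih =>
    have h1 : a + (d+1) = (a+d) + 1 := by omega
    rw [h1, Finset.sum_Icc_succ_top (by omega), ih]
    have h2 : ∀ i ∈ Finset.range (d+1), f (a+d+1-(i+1)) = f (a+d-i) := by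
      intro i hi; congr 1; omega
    conv_rhs => rw [Finset.sum_range_succ', Finset.sum_congr rfl h2]
    simp

lemma cons_inj (a : ℕ) : Function.Injective (List.cons a) := fun _ _ h => by
  injection h

theorem card_W : ∀ (n : ℕ), 1 ≤ n → ∀ m l, 1 ≤ l → l ≤ m →
    (W n m l).card =
      if l = m then Nat.choose (n-1) (m-1) else Nat.choose (n+m-l-2) (2*m-l-1)
  | 0, h, _, _, _, _ => by omega
  | 1, _, m, l, hl, hlm => by
    rw [W]
    split
    · rename_i h
      obtain ⟨h1, h2⟩ := h
      subst h1; subst h2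
      simp
    · rename_i h
      rcases Nat.lt_or_ge l m with hlt | hge
      · rw [if_neg (by omega), Finset.card_empty]
        symm
        apply Nat.choose_eq_zero_of_lt
        omega
      · have hlm' : l = m := by omega
        have hm2 : 2 ≤ m := by
          rcases Nat.lt_or_ge m 2 with h2 | h2
          · exfalso; exact h ⟨by omega, by omega⟩
          · exact h2
        rw [if_pos hlm', Finset.card_empty]
        symm
        apply Nat.choose_eq_zero_of_lt
        omega
  | (n+2), _, m, l, hl, hlm => by
    rcases Nat.eq_or_lt_of_le hlm with hEq | hLt
    · -- l = m
      subst hEq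
      rw [W, if_pos rfl, if_pos rfl]
      rcases Nat.eq_or_lt_of_le hl with h1 | h1
      · -- l = 1
        have hW0 : W (n+1) (l-1) (l-1) = ∅ := by
          rw [← h1]; exact W_zero (n+1) 0
        rw [hW0, Finset.image_empty, Finset.union_empty,
          Finset.card_image_of_injective _ (cons_inj l),
          card_W (n+1) (by omega) l l hl (le_refl _), if_pos rfl]
        rw [← h1]
        simp
      · -- 2 ≤ l
        have hdisj : Disjoint ((W (n+1) l l).image (List.cons l))
            ((W (n+1) (l-1) (l-1)).image (List.cons l)) := by
          rw [Finset.disjoint_left]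
          rintro u hu1 hu2
          obtain ⟨w1, hw1, he1⟩ := Finset.mem_image.1 hu1
          obtain ⟨w2, hw2, he2⟩ := Finset.mem_image.1 hu2
          have hw12 : w1 = w2 := by
            rw [← he2] at he1
            exact cons_inj l he1
          have s1 := (W_spec _ _ _ _ hw1).2.2.1
          have s2 := (W_spec _ _ _ _ hw2).2.2.1
          rw [hw12, s2] at s1
          omega
        rw [Finset.card_union_of_disjoint hdisj,
          Finset.card_image_of_injective _ (cons_inj l),
          Finset.card_image_of_injective _ (cons_inj l),
          card_W (n+1) (by omega) l l hl (le_refl _), if_pos rfl,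
          card_W (n+1) (by omega) (l-1) (l-1) (by omega) (le_refl _), if_pos rfl]
        obtain ⟨k, hk⟩ : ∃ k, l = k + 2 := ⟨l - 2, by omega⟩
        subst hk
        show Nat.choose n (k+1) + Nat.choose n k = Nat.choose (n+1) (k+1)
        conv_rhs => rw [Nat.choose_succ_succ]
        simp only [Nat.succ_eq_add_one]
        omega
    · -- l < m
      rw [W, if_neg (by omega), if_pos ⟨hl, hLt⟩, if_neg (by omega)]
      rw [Finset.card_biUnion]
      · -- sum computation
        have hsummand : ∀ t ∈ Finset.Icc l m, ((W (n+1) m t).image (List.cons l)).card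
            = if t = m then Nat.choose n (m-1) else Nat.choose (n+1+m-t-2) (2*m-t-1) := by
          intro t ht
          rw [Finset.mem_Icc] at ht
          rw [Finset.card_image_of_injective _ (cons_inj l),
            card_W (n+1) (by omega) m t (by omega) ht.2]
          split <;> rfl
        rw [Finset.sum_congr rfl hsummand]
        obtain ⟨d, hd⟩ : ∃ d, m = l + (d + 1) := ⟨m - l - 1, by omega⟩
        subst hd
        rw [show l + (d+1) = l + (d+1) from rfl]
        have hIcc : Finset.Icc l (l + (d+1)) = Finset.Icc l (l + (d+1)) := rfl
        rw [sum_Icc_eq _ l (d+1), Finset.sum_range_succ']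
        have hzero : (if l + (d+1) - 0 = l + (d+1) then Nat.choose n (l + (d+1) - 1)
            else Nat.choose (n+1+(l+(d+1))-(l+(d+1)-0)-2) (2*(l+(d+1))-(l+(d+1)-0)-1))
            = Nat.choose n (l+d) := by
          rw [if_pos (by omega)]
          rfl
        have hrest : ∀ i ∈ Finset.range (d+1),
            (if l + (d+1) - (i+1) = l + (d+1) then Nat.choose n (l + (d+1) - 1)
            else Nat.choose (n+1+(l+(d+1))-(l+(d+1)-(i+1))-2) (2*(l+(d+1))-(l+(d+1)-(i+1))-1))
            = Nat.choose (n+i) ((l+d)+i+1) := by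
          intro i hi
          rw [Finset.mem_range] at hi
          rw [if_neg (by omega)]
          congr 1 <;> omega
        rw [Finset.sum_congr rfl hrest, hzero]
        have hh := hockA d n (l+d)
        have hR : n+2+(l+(d+1))-l-2 = n+d+1 := by omega
        have hR2 : 2*(l+(d+1))-l-1 = l+d+d+1 := by omega
        rw [hR, hR2]
        omega
      · -- disjointness
        intro t1 h1 t2 h2 hne
        rw [Function.onFun, Finset.disjoint_left]
        rintro u hu1 hu2
        obtain ⟨w1, hw1, he1⟩ := Finset.mem_image.1 hu1
        obtain ⟨w2, hw2, he2⟩ := Finset.mem_image.1 hu2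
        have hw12 : w1 = w2 := by
          rw [← he2] at he1
          exact cons_inj l he1
        have s1 := (W_spec _ _ _ _ hw1).2.2.1
        have s2 := (W_spec _ _ _ _ hw2).2.2.1
        rw [hw12, s2] at s1
        exact hne s1.symm

/-! ### Fibonacci sums -/

def sFib (N : ℕ) : ℕ := ∑ k ∈ Finset.range (N+1), Nat.choose (N+k) (2*k)
def tFib (N : ℕ) : ℕ := ∑ k ∈ Finset.range (N+1), Nat.choose (N+k) (2*k+1)

lemma tFib_succ (N : ℕ) : tFib (N+1) = tFib N + sFib N := by
  unfold tFib sFib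
  have h1 : ∀ k ∈ Finset.range (N+2), Nat.choose (N+1+k) (2*k+1)
      = Nat.choose (N+k) (2*k) + Nat.choose (N+k) (2*k+1) := by
    intro k _
    have : N+1+k = (N+k)+1 := by omega
    rw [this, Nat.choose_succ_succ]
  rw [Finset.sum_congr rfl h1, Finset.sum_add_distrib]
  rw [Finset.sum_range_succ, Finset.sum_range_succ (fun k => Nat.choose (N+k) (2*k+1))]
  have z1 : Nat.choose (N+(N+1)) (2*(N+1)) = 0 := Nat.choose_eq_zero_of_lt (by omega)
  have z2 : Nat.choose (N+(N+1)) (2*(N+1)+1) = 0 := Nat.choose_eq_zero_of_lt (by omega)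
  rw [z1, z2]
  omega

lemma sFib_succ (N : ℕ) : sFib (N+1) = sFib N + tFib (N+1) := by
  have hA : sFib (N+1) = (∑ i ∈ Finset.range (N+1),
      (Nat.choose (N+1+i) (2*i+1) + Nat.choose (N+1+i) (2*i+2))) + 1 := by
    unfold sFib
    rw [Finset.sum_range_succ']
    congr 1
  have hB : sFib N = (∑ i ∈ Finset.range (N+1), Nat.choose (N+1+i) (2*i+2)) + 1 := by
    unfold sFib
    rw [Finset.sum_range_succ']
    congr 1
    · rw [Finset.sum_range_succ]
      have z : Nat.choose (N+1+N) (2*N+2) = 0 := Nat.choose_eq_zero_of_lt (by omega)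
      rw [z, Nat.add_zero]
      apply Finset.sum_congr rfl
      intro i _
      congr 1 <;> omega
    · simp
  have hC : tFib (N+1) = ∑ i ∈ Finset.range (N+1), Nat.choose (N+1+i) (2*i+1) := by
    unfold tFib
    rw [Finset.sum_range_succ]
    have z : Nat.choose (N+1+(N+1)) (2*(N+1)+1) = 0 := Nat.choose_eq_zero_of_lt (by omega)
    rw [z, Nat.add_zero]
  rw [Finset.sum_add_distrib] at hA
  omega

lemma sFib_eq_fib : ∀ N, sFib N = Nat.fib (2*N+1) ∧ tFib N = Nat.fib (2*N) := by
  intro N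
  induction N with
  | zero => constructor <;> simp [sFib, tFib]
  | succ N ih =>
    obtain ⟨hs, ht⟩ := ih
    have ht' : tFib (N+1) = Nat.fib (2*(N+1)) := by
      rw [tFib_succ, hs, ht]
      have e : 2*(N+1) = (2*N)+2 := by omega
      rw [e, Nat.fib_add_two]
    constructor
    · rw [sFib_succ, hs, ht']
      have e : 2*(N+1)+1 = (2*N+1)+2 := by omega
      rw [e, Nat.fib_add_two]
      have e2 : (2*N+1)+1 = 2*(N+1) := by omega
      rw [e2]
    · exact ht'

/-! ### TotalW count -/

lemma sum_Icc_eq' (f : ℕ → ℕ) : ∀ (a d : ℕ),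
    ∑ t ∈ Finset.Icc a (a+d), f t = ∑ i ∈ Finset.range (d+1), f (a+i) := by
  intro a d
  induction d with
  | zero => simp
  | succ d ih =>
    have h1 : a + (d+1) = (a+d) + 1 := by omega
    rw [h1, Finset.sum_Icc_succ_top (by omega), ih]
    conv_rhs => rw [Finset.sum_range_succ]
    rfl

lemma sum_W_inner (n : ℕ) (hn : 1 ≤ n) (m : ℕ) (hm : 1 ≤ m) :
    ∑ l ∈ Finset.Icc 1 m, (W n m l).card = Nat.choose (n+m-2) (2*m-2) := by
  rcases Nat.eq_or_lt_of_le hm with h1 | h1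
  · rw [← h1]
    simp only [Finset.Icc_self, Finset.sum_singleton]
    rw [card_W n hn 1 1 (le_refl _) (le_refl _), if_pos rfl]
    congr 1 <;> omega
  · -- 2 ≤ m
    have hcards : ∀ l ∈ Finset.Icc 1 m, (W n m l).card
        = if l = m then Nat.choose (n-1) (m-1) else Nat.choose (n+m-l-2) (2*m-l-1) := by
      intro l hl
      rw [Finset.mem_Icc] at hl
      exact card_W n hn m l hl.1 hl.2
    rw [Finset.sum_congr rfl hcards]
    obtain ⟨d, hd⟩ : ∃ d, m = 1 + (d + 1) := ⟨m - 2, by omega⟩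
    subst hd
    rw [sum_Icc_eq _ 1 (d+1), Finset.sum_range_succ']
    have hzero : (if 1 + (d+1) - 0 = 1 + (d+1) then Nat.choose (n-1) (1+(d+1)-1)
        else Nat.choose (n+(1+(d+1))-(1+(d+1)-0)-2) (2*(1+(d+1))-(1+(d+1)-0)-1))
        = Nat.choose (n-1) (1+d) := by
      rw [if_pos (by omega)]
      rfl
    have hrest : ∀ i ∈ Finset.range (d+1),
        (if 1 + (d+1) - (i+1) = 1 + (d+1) then Nat.choose (n-1) (1+(d+1)-1)
        else Nat.choose (n+(1+(d+1))-(1+(d+1)-(i+1))-2) (2*(1+(d+1))-(1+(d+1)-(i+1))-1))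
        = Nat.choose ((n-1)+i) ((1+d)+i+1) := by
      intro i hi
      rw [Finset.mem_range] at hi
      rw [if_neg (by omega)]
      congr 1 <;> omega
    rw [Finset.sum_congr rfl hrest, hzero]
    have hh := hockA d (n-1) (1+d)
    have hR : n+(1+(d+1))-2 = (n-1)+d+1 := by omega
    have hR2 : 2*(1+(d+1))-2 = 1+d+d+1 := by omega
    rw [hR, hR2]
    omega

def TotalW (n : ℕ) : Finset (List ℕ) :=
  (Finset.Icc 1 n).biUnion (fun m => (Finset.Icc 1 m).biUnion (fun l => W n m l))

lemma maxL_le_length {u : List ℕ} (h : RV u) : maxL u ≤ u.length := by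
  induction h with
  | base => simp [maxL]
  | step l t w hrv h1 hcond ih =>
    have ht : t ≤ maxL (t :: w) := le_maxL List.mem_cons_self
    simp only [maxL_cons, List.length_cons] at *
    omega

lemma mem_Total {n : ℕ} (hn : 1 ≤ n) (u : List ℕ) :
    u ∈ TotalW n ↔ (RV u ∧ u.length = n) := by
  constructor
  · intro hu
    obtain ⟨m, _, hu⟩ := Finset.mem_biUnion.1 hu
    obtain ⟨l, _, hu⟩ := Finset.mem_biUnion.1 hu
    obtain ⟨h1, h2, _⟩ := W_spec _ _ _ _ hu
    exact ⟨h1, h2⟩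
  · rintro ⟨hrv, hlen⟩
    have hc := W_complete u hrv
    obtain ⟨_, _, _, _, hl1, hlm⟩ := W_spec _ _ _ _ hc
    have hml : maxL u ≤ u.length := maxL_le_length hrv
    refine Finset.mem_biUnion.2 ⟨maxL u, Finset.mem_Icc.2 ⟨by omega, by omega⟩,
      Finset.mem_biUnion.2 ⟨u.headI, Finset.mem_Icc.2 ⟨hl1, hlm⟩, ?_⟩⟩
    rw [← hlen]
    exact hc

lemma card_Total {n : ℕ} (hn : 1 ≤ n) : (TotalW n).card = Nat.fib (2*n-1) := by
  unfold TotalW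
  rw [Finset.card_biUnion]
  · have hinner : ∀ m ∈ Finset.Icc 1 n,
        ((Finset.Icc 1 m).biUnion (fun l => W n m l)).card = Nat.choose (n+m-2) (2*m-2) := by
      intro m hm
      rw [Finset.mem_Icc] at hm
      rw [Finset.card_biUnion]
      · exact sum_W_inner n hn m hm.1
      · intro l1 h1 l2 h2 hne
        rw [Function.onFun, Finset.disjoint_left]
        intro u hu1 hu2
        have s1 := (W_spec _ _ _ _ hu1).2.2.1
        have s2 := (W_spec _ _ _ _ hu2).2.2.1
        rw [s2] at s1
        exact hne s1.symm
    rw [Finset.sum_congr rfl hinner]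
    obtain ⟨d, hd⟩ : ∃ d, n = 1 + d := ⟨n - 1, by omega⟩
    subst hd
    rw [sum_Icc_eq' _ 1 d]
    have hpt : ∀ i ∈ Finset.range (d+1),
        Nat.choose ((1+d)+(1+i)-2) (2*(1+i)-2) = Nat.choose (d+i) (2*i) := by
      intro i _
      congr 1 <;> omega
    rw [Finset.sum_congr rfl hpt]
    have hs := (sFib_eq_fib d).1
    unfold sFib at hs
    have e : 2*(1+d)-1 = 2*d+1 := by omega
    rw [e, ← hs]
  · intro m1 h1 m2 h2 hne
    rw [Function.onFun, Finset.disjoint_left]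
    intro u hu1 hu2
    obtain ⟨l1, _, hu1⟩ := Finset.mem_biUnion.1 hu1
    obtain ⟨l2, _, hu2⟩ := Finset.mem_biUnion.1 hu2
    have s1 := (W_spec _ _ _ _ hu1).2.2.2.1
    have s2 := (W_spec _ _ _ _ hu2).2.2.2.1
    rw [s2] at s1
    exact hne s1.symm

/-! ### Glue -/

lemma listOf_congr {v v' : ℕ → ℕ} : ∀ n, (∀ i, i < n → v i = v' i) → listOf v n = listOf v' n := by
  intro n
  induction n with
  | zero => intro _; rfl
  | succ n ih =>
    intro h
    simp only [listOf_succ]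
    rw [h n (by omega), ih (fun i hi => h i (by omega))]

lemma listOf_inj {v v' : ℕ → ℕ} : ∀ n, listOf v n = listOf v' n → ∀ i, i < n → v i = v' i := by
  intro n
  induction n with
  | zero => intro _ i hi; omega
  | succ n ih =>
    intro h i hi
    simp only [listOf_succ, List.cons.injEq] at h
    rcases Nat.lt_or_ge i n with h2 | h2
    · exact ih h.2 i h2
    · have : i = n := by omega
      rw [this]; exact h.1

lemma listOf_getD : ∀ (u : List ℕ), listOf (fun i => u.reverse.getD i 0) u.length = u := by
  intro u
  induction u with
  | nil => rfl
  | cons a u ih =>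
    simp only [List.length_cons, listOf_succ, List.reverse_cons]
    have hhead : (u.reverse ++ [a]).getD u.length 0 = a := by
      rw [List.getD_append_right _ _ _ _ (by simp)]
      simp
    have h1 : ∀ i, i < u.length → (u.reverse ++ [a]).getD i 0 = u.reverse.getD i 0 := by
      intro i hi
      exact List.getD_append _ _ _ _ (by simp [hi])
    rw [hhead, listOf_congr u.length h1, ih]

theorem catalan_avoid_2_12' (n' : ℕ) :
    Set.ncard {w : Fin (n'+1) → ℕ | IsCatalanWord w ∧ ¬ Contains2_12 w} =
      Nat.fib (2 * (n'+1) - 1) := by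
  set φ : (Fin (n'+1) → ℕ) → List ℕ :=
    fun w => listOf (fun i => if h : i < n'+1 then w ⟨i, h⟩ else 0) (n'+1) with hφ
  have hiff : ∀ w : Fin (n'+1) → ℕ,
      (IsCatalanWord w ∧ ¬ Contains2_12 w) ↔ RV (φ w) := by
    intro w
    set v : ℕ → ℕ := fun i => if h : i < n'+1 then w ⟨i, h⟩ else 0 with hv
    have hvv : ∀ (i : ℕ) (h : i < n'+1), v i = w ⟨i, h⟩ := by
      intro i h
      simp only [hv]
      rw [dif_pos h]
    have hvw : ∀ (i : Fin (n'+1)), v i.val = w i := by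
      intro i
      rw [hvv i.val i.isLt]
    have hCat : IsCatalanWord w ↔ Cat' v (n'+1) := by
      constructor
      · rintro ⟨h1, h2, h3⟩
        refine ⟨fun i hi => ?_, fun _ => ?_, fun i hi => ?_⟩
        · rw [hvv i hi]; exact h1 _
        · rw [hvv 0 (by omega)]; exact h2 (by omega)
        · rw [hvv (i+1) hi, hvv i (by omega)]; exact h3 i hi
      · rintro ⟨h1, h2, h3⟩
        refine ⟨fun i => ?_, fun h => ?_, fun i hi => ?_⟩
        · rw [← hvw i]; exact h1 i.val i.isLt
        · rw [← hvv 0 (by omega)]; exact h2 (by omega)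
        · rw [← hvv (i+1) hi, ← hvv i (by omega)]; exact h3 i hi
    have hAvd : Contains2_12 w ↔ ¬ Avd' v (n'+1) := by
      constructor
      · rintro ⟨i, j, hj, hij, hlt, heq⟩
        intro hA
        refine hA ⟨i, j, hj, hij, ?_, ?_⟩
        · rw [hvv j (by omega), hvv i (by omega)]; exact hlt
        · rw [hvv (j+1) hj, hvv i (by omega)]; exact heq
      · intro hA
        obtain ⟨i, j, hj, hij, hlt, heq⟩ := not_not.1 hA
        refine ⟨i, j, hj, hij, ?_, ?_⟩
        · rw [← hvv j (by omega), ← hvv i (by omega)]; exact hlt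
        · rw [← hvv (j+1) hj, ← hvv i (by omega)]; exact heq
    have hRV := rv_iff' n' v
    constructor
    · rintro ⟨hc, hnc⟩
      refine hRV.1 ⟨hCat.1 hc, ?_⟩
      by_contra hA
      exact hnc (hAvd.2 hA)
    · intro h
      obtain ⟨h1, h2⟩ := hRV.2 h
      exact ⟨hCat.2 h1, fun hc => (hAvd.1 hc) h2⟩
  have hφinj : Function.Injective φ := by
    intro w1 w2 h
    funext i
    have h2 := listOf_inj (n'+1) h i.val i.isLt
    simp only [dif_pos i.isLt] at h2
    simpa [Fin.eta] using h2
  have himg : φ '' {w | IsCatalanWord w ∧ ¬ Contains2_12 w} = ↑(TotalW (n'+1)) := by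
    ext u
    simp only [Set.mem_image, Set.mem_setOf_eq, Finset.mem_coe]
    rw [mem_Total (by omega)]
    constructor
    · rintro ⟨w, hw, rfl⟩
      exact ⟨(hiff w).1 hw, length_listOf _ _⟩
    · rintro ⟨hrv, hlen⟩
      set v : ℕ → ℕ := fun i => u.reverse.getD i 0 with hv
      set w : Fin (n'+1) → ℕ := fun i => v i.val with hw
      have hphi : φ w = u := by
        show listOf (fun i => if h : i < n'+1 then w ⟨i, h⟩ else 0) (n'+1) = u
        have h1 : ∀ i, i < n'+1 → (if h : i < n'+1 then w ⟨i, h⟩ else 0) = v i := by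
          intro i hi
          rw [dif_pos hi]
        rw [listOf_congr (n'+1) h1, hv, ← hlen, listOf_getD u]
      refine ⟨w, ?_, hphi⟩
      apply (hiff w).2
      rw [hphi]
      exact hrv
  have h1 : ({w : Fin (n'+1) → ℕ | IsCatalanWord w ∧ ¬ Contains2_12 w}).ncard
      = (φ '' {w | IsCatalanWord w ∧ ¬ Contains2_12 w}).ncard :=
    (Set.ncard_image_of_injective _ hφinj).symm
  rw [h1, himg, Set.ncard_coe_finset, card_Total (by omega)]

theorem catalan_avoid_2_12 (n : ℕ) (hn : 1 ≤ n) :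
    Set.ncard {w : Fin n → ℕ | IsCatalanWord w ∧ ¬ Contains2_12 w} =
      Nat.fib (2 * n - 1) := by
  obtain ⟨n', rfl⟩ : ∃ k, n = k + 1 := ⟨n - 1, by omega⟩
  exact catalan_avoid_2_12' n'
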